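/- arXiv:2210.16408 — 2 statements merged into one kernel-verified Lean document; each statement's English description precedes it below -/
import Mathlib

section
/- Let products be indexed by positions 1,…,n with independent effective values W̃_j = u_j + M_j, M_j i.i.d. continuous, and outside option value W̃₀. A consumer discovers positions sequentially, stopping at the first h with max(W̃₀, W̃₁, …, W̃_h) ≥ z^d(h) where z^d is weakly decreasing, and buys the maximizing alternative. Then swapping two adjacent products A (position h) and B (position h+1) with u_A < u_B weakly increases the probability that some product (not the outside option) is purchased. -/
open MeasureTheory

/-- Value of the product displayed at (0-indexed) position `j` under ranking `r`
(a permutation mapping positions to products), with utility `u` and noise `M`. -/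
noncomputable def posVal {Ω : Type*} (n : ℕ) (u : Fin n → ℝ) (M : Fin n → Ω → ℝ)
    (r : Equiv.Perm (Fin n)) (j : ℕ) (ω : Ω) : ℝ :=
  if h : j < n then u (r ⟨j, h⟩) + M (r ⟨j, h⟩) ω else 0

/-- Running maximum of the outside option value `W0` and the values of the first `h`
discovered products. -/
noncomputable def runMax {Ω : Type*} (W0 : Ω → ℝ) (v : ℕ → Ω → ℝ) (h : ℕ) (ω : Ω) : ℝ :=
  (Finset.range (h + 1)).sup' (Finset.nonempty_range_iff.mpr (Nat.succ_ne_zero h))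
    (fun j => if j = 0 then W0 ω else v (j - 1) ω)

/-- Stopping position: the first `h` at which the running maximum reaches the (weakly
decreasing) discovery value `zd h`, capped at `n`. -/
noncomputable def stopPos {Ω : Type*} (n : ℕ) (zd : ℕ → ℝ) (W0 : Ω → ℝ)
    (v : ℕ → Ω → ℝ) (ω : Ω) : ℕ :=
  sInf {h : ℕ | zd h ≤ runMax W0 v h ω ∨ h = n}

/-- Event that some product (rather than the outside option) is purchased: the best
discovered value strictly exceeds the outside option. -/
def purchaseEvent {Ω : Type*} (n : ℕ) (zd : ℕ → ℝ) (W0 : Ω → ℝ)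
    (v : ℕ → Ω → ℝ) : Set Ω :=
  {ω | W0 ω < runMax W0 v (stopPos n zd W0 v ω) ω}

section Det

variable {Ω : Type*} {W0 : Ω → ℝ} {v v' : ℕ → Ω → ℝ} {ω : Ω} {n : ℕ} {zd : ℕ → ℝ}

lemma runMax_zero : runMax W0 v 0 ω = W0 ω := by
  simp [runMax]

lemma runMax_succ (h : ℕ) :
    runMax W0 v (h + 1) ω = max (runMax W0 v h ω) (v h ω) := by
  set f : ℕ → ℝ := fun j => if j = 0 then W0 ω else v (j - 1) ω with hf
  have hfh : f (h + 1) = v h ω := by simp [hf]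
  apply le_antisymm
  · apply Finset.sup'_le
    intro j hj
    rw [Finset.mem_range] at hj
    rcases Nat.lt_succ_iff_lt_or_eq.mp hj with hj' | hj'
    · exact le_max_of_le_left (Finset.le_sup' f (Finset.mem_range.mpr hj'))
    · subst hj'
      simpa using le_max_right (runMax W0 v h ω) (v h ω)
  · apply max_le
    · apply Finset.sup'_le
      intro j hj
      rw [Finset.mem_range] at hj
      exact Finset.le_sup' f (Finset.mem_range.mpr (hj.trans (Nat.lt_succ_self _)))
    · calc v h ω = f (h+1) := hfh.symm
        _ ≤ _ := Finset.le_sup' f (Finset.mem_range.mpr (Nat.lt_succ_self _))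

lemma le_runMax (h : ℕ) : W0 ω ≤ runMax W0 v h ω := by
  have := Finset.le_sup' (s := Finset.range (h + 1))
    (fun j => if j = 0 then W0 ω else v (j - 1) ω)
    (Finset.mem_range.mpr (Nat.succ_pos h))
  rw [if_pos rfl] at this
  exact this

lemma runMax_mono : Monotone (fun h => runMax W0 v h ω) := by
  apply monotone_nat_of_le_succ
  intro h
  rw [runMax_succ]
  exact le_max_left _ _

/-- stopping set -/
lemma stop_mem_or :
    zd (stopPos n zd W0 v ω) ≤ runMax W0 v (stopPos n zd W0 v ω) ω ∨
      stopPos n zd W0 v ω = n := by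
  have : stopPos n zd W0 v ω ∈ {h : ℕ | zd h ≤ runMax W0 v h ω ∨ h = n} :=
    Nat.sInf_mem ⟨n, Or.inr rfl⟩
  exact this

lemma stop_le_n : stopPos n zd W0 v ω ≤ n := Nat.sInf_le (Or.inr rfl)

lemma stop_not_mem {k : ℕ} (hk : k < stopPos n zd W0 v ω) :
    ¬ (zd k ≤ runMax W0 v k ω ∨ k = n) :=
  Nat.notMem_of_lt_sInf hk

/-- Master monotonicity lemma. -/
lemma purchase_master
    (hR : ∀ h ≤ stopPos n zd W0 v ω, runMax W0 v h ω ≤ runMax W0 v' h ω)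
    (hp : ω ∈ purchaseEvent n zd W0 v) : ω ∈ purchaseEvent n zd W0 v' := by
  set τ := stopPos n zd W0 v ω with hτ
  set τ' := stopPos n zd W0 v' ω with hτ'
  have hle : τ' ≤ τ := by
    apply Nat.sInf_le
    rcases (stop_mem_or (n := n) (zd := zd) (W0 := W0) (v := v) (ω := ω)) with h | h
    · exact Or.inl (h.trans (hR τ le_rfl))
    · exact Or.inr h
  rcases eq_or_lt_of_le hle with heq | hlt
  · have : W0 ω < runMax W0 v τ ω := hp
    calc W0 ω < runMax W0 v τ ω := this
    _ ≤ runMax W0 v' τ ω := hR τ le_rfl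
    _ = runMax W0 v' τ' ω := by rw [heq]
  · have hnot := stop_not_mem (n := n) (zd := zd) (W0 := W0) (v := v) (ω := ω) hlt
    push_neg at hnot
    have hmem := stop_mem_or (n := n) (zd := zd) (W0 := W0) (v := v') (ω := ω)
    rcases hmem with h | h
    · have : W0 ω ≤ runMax W0 v τ' ω := le_runMax _
      have h2 : runMax W0 v τ' ω < zd τ' := hnot.1
      exact lt_of_le_of_lt this (lt_of_lt_of_le h2 h)
    · exact absurd h hnot.2

lemma stop_eq_iff {h : ℕ} :
    stopPos n zd W0 v ω = h ↔
      ((zd h ≤ runMax W0 v h ω ∨ h = n) ∧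
        ∀ k < h, ¬(zd k ≤ runMax W0 v k ω ∨ k = n)) := by
  constructor
  · rintro rfl
    exact ⟨stop_mem_or, fun k hk => stop_not_mem hk⟩
  · rintro ⟨hmem, hbelow⟩
    refine le_antisymm (Nat.sInf_le hmem) ?_
    by_contra hc
    push_neg at hc
    have hmem2 : stopPos n zd W0 v ω ∈ {h : ℕ | zd h ≤ runMax W0 v h ω ∨ h = n} :=
      Nat.sInf_mem ⟨n, Or.inr rfl⟩
    exact hbelow _ hc hmem2

section Pair

variable {a : ℕ}

/-- Running maxima agree below a position where the value sequences agree. -/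
lemma rm_low (hoff : ∀ j, j ≠ a → j ≠ a + 1 → v j ω = v' j ω) :
    ∀ h, h ≤ a → runMax W0 v h ω = runMax W0 v' h ω := by
  intro h hh
  induction h with
  | zero => rw [runMax_zero, runMax_zero]
  | succ m ih =>
    rw [runMax_succ, runMax_succ, ih (le_of_lt (Nat.lt_of_succ_le hh)),
      hoff m (by omega) (by omega)]

lemma rm_le (hoff : ∀ j, j ≠ a → j ≠ a + 1 → v j ω = v' j ω)
    (h1 : v a ω ≤ v' a ω)
    (h2 : max (v a ω) (v (a + 1) ω) ≤ max (v' a ω) (v' (a + 1) ω)) :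
    ∀ h, runMax W0 v h ω ≤ runMax W0 v' h ω := by
  intro h
  induction h with
  | zero => rw [runMax_zero, runMax_zero]
  | succ m ih =>
    rcases Nat.lt_trichotomy m a with hm | hm | hm
    · rw [rm_low hoff (m+1) hm]
    · subst hm
      rw [runMax_succ, runMax_succ, rm_low hoff m le_rfl]
      exact max_le_max le_rfl h1
    · rcases Nat.eq_or_lt_of_le hm with hm' | hm'
      · have hm2 : m = a + 1 := hm'.symm
        subst hm2
        rw [runMax_succ, runMax_succ, runMax_succ, runMax_succ,
          rm_low hoff a le_rfl, max_assoc, max_assoc]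
        exact max_le_max le_rfl h2
      · rw [runMax_succ, runMax_succ, hoff m (by omega) (by omega)]
        exact max_le_max ih le_rfl

lemma rm_high (hoff : ∀ j, j ≠ a → j ≠ a + 1 → v j ω = v' j ω)
    (hmax : max (v a ω) (v (a + 1) ω) = max (v' a ω) (v' (a + 1) ω)) :
    ∀ h, a + 2 ≤ h → runMax W0 v h ω = runMax W0 v' h ω := by
  intro h hh
  induction h with
  | zero => omega
  | succ m ih =>
    rcases Nat.eq_or_lt_of_le hh with hm | hm
    · have hma : m = a + 1 := by omega
      subst hma
      rw [runMax_succ, runMax_succ, runMax_succ, runMax_succ,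
        rm_low hoff a le_rfl, max_assoc, max_assoc, hmax]
    · rw [runMax_succ, runMax_succ, ih (by omega), hoff m (by omega) (by omega)]


lemma purchase_easy (hoff : ∀ j, j ≠ a → j ≠ a + 1 → v j ω = v' j ω)
    (h1 : v a ω ≤ v' a ω)
    (h2 : max (v a ω) (v (a + 1) ω) ≤ max (v' a ω) (v' (a + 1) ω)) :
    ω ∈ purchaseEvent n zd W0 v → ω ∈ purchaseEvent n zd W0 v' :=
  purchase_master (fun h _ => rm_le hoff h1 h2 h)

lemma purchase_hard {v1 v2 v3 : ℕ → Ω → ℝ}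
    (hoff13 : ∀ j, j ≠ a → j ≠ a + 1 → v1 j ω = v3 j ω)
    (hoff23 : ∀ j, j ≠ a → j ≠ a + 1 → v2 j ω = v3 j ω)
    (hpt : v1 a ω ≤ v3 a ω)
    (h3a : v3 a ω = v2 (a + 1) ω)
    (h3b : v3 (a + 1) ω = v2 a ω)
    (hts : v3 a ω ≤ v3 (a + 1) ω)
    (han : a + 1 < n)
    (hP1 : ω ∈ purchaseEvent n zd W0 v1) (hP2 : ω ∈ purchaseEvent n zd W0 v2) :
    ω ∈ purchaseEvent n zd W0 v3 := by
  have hoff32 : ∀ j, j ≠ a → j ≠ a + 1 → v3 j ω = v2 j ω :=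
    fun j hj1 hj2 => (hoff23 j hj1 hj2).symm
  have hmax32 : max (v3 a ω) (v3 (a + 1) ω) = max (v2 a ω) (v2 (a + 1) ω) := by
    rw [h3a, h3b, max_comm]
  have hR32 : ∀ h, runMax W0 v3 h ω ≤ runMax W0 v2 h ω := by
    intro h
    exact rm_le hoff32 (by rw [h3b] at hts; exact hts) hmax32.le h
  set τ2 := stopPos n zd W0 v2 ω with hτ2
  set τ3 := stopPos n zd W0 v3 ω with hτ3
  have hτ23 : τ2 ≤ τ3 := by
    apply Nat.sInf_le
    rcases stop_mem_or (n := n) (zd := zd) (W0 := W0) (v := v3) (ω := ω) with h | h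
    · exact Or.inl (h.trans (hR32 τ3))
    · exact Or.inr h
  rcases eq_or_lt_of_le hτ23 with heq | hlt
  · -- same stopping position
    rcases Nat.lt_trichotomy τ3 (a + 1) with hc | hc | hc
    · have hRe : runMax W0 v2 τ3 ω = runMax W0 v3 τ3 ω :=
        rm_low hoff23 τ3 (by omega)
      have : W0 ω < runMax W0 v2 τ2 ω := hP2
      show W0 ω < runMax W0 v3 τ3 ω
      rw [← hRe, ← heq]; exact this
    · -- τ3 = a + 1
      show W0 ω < runMax W0 v3 τ3 ω
      by_contra hcon
      push_neg at hcon
      have hpre3 : W0 ω ≤ runMax W0 v3 a ω := le_runMax a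
      have hsucc3 : runMax W0 v3 τ3 ω = max (runMax W0 v3 a ω) (v3 a ω) := by
        rw [hc]; exact runMax_succ a
      have hpre_eq : runMax W0 v3 a ω = W0 ω := by
        refine le_antisymm ?_ hpre3
        calc runMax W0 v3 a ω ≤ runMax W0 v3 τ3 ω := by
              rw [hsucc3]; exact le_max_left _ _
          _ ≤ W0 ω := hcon
      have ht_le : v3 a ω ≤ W0 ω := by
        calc v3 a ω ≤ runMax W0 v3 τ3 ω := by rw [hsucc3]; exact le_max_right _ _
          _ ≤ W0 ω := hcon
      have hp_le : v1 a ω ≤ W0 ω := hpt.trans ht_le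
      have hpre13 : runMax W0 v1 a ω = runMax W0 v3 a ω := rm_low hoff13 a le_rfl
      have hR1succ : runMax W0 v1 (a + 1) ω = W0 ω := by
        rw [runMax_succ, hpre13, hpre_eq, max_eq_left hp_le]
      have hzd : zd (a + 1) ≤ W0 ω := by
        rcases stop_mem_or (n := n) (zd := zd) (W0 := W0) (v := v3) (ω := ω) with h | h
        · have h' : zd τ3 ≤ runMax W0 v3 τ3 ω := h
          rw [hc] at h'
          have hcon' : runMax W0 v3 (a + 1) ω ≤ W0 ω := by rw [← hc]; exact hcon
          exact h'.trans hcon'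
        · have h' : τ3 = n := h
          omega
      have hstop1 : stopPos n zd W0 v1 ω = a + 1 := by
        rw [stop_eq_iff]
        constructor
        · exact Or.inl (by rw [hR1succ]; exact hzd)
        · intro k hk hmem
          have hknot := stop_not_mem (n := n) (zd := zd) (W0 := W0) (v := v2) (ω := ω)
            (k := k) (by omega)
          apply hknot
          have : runMax W0 v1 k ω = runMax W0 v2 k ω := by
            rw [rm_low hoff13 k (by omega), ← rm_low hoff23 k (by omega)]
          rwa [this] at hmem
      have : W0 ω < runMax W0 v1 (a + 1) ω := by
        have h' : W0 ω < runMax W0 v1 (stopPos n zd W0 v1 ω) ω := hP1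
        rwa [hstop1] at h'
      rw [hR1succ] at this
      exact lt_irrefl _ this
    · have hRe : runMax W0 v2 τ3 ω = runMax W0 v3 τ3 ω :=
        rm_high hoff23 hmax32.symm τ3 (by omega)
      have : W0 ω < runMax W0 v2 τ2 ω := hP2
      show W0 ω < runMax W0 v3 τ3 ω
      rw [← hRe, ← heq]; exact this
  · -- τ2 < τ3
    have hns := stop_not_mem (n := n) (zd := zd) (W0 := W0) (v := v3) (ω := ω) hlt
    push_neg at hns
    have hm2 := stop_mem_or (n := n) (zd := zd) (W0 := W0) (v := v2) (ω := ω)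
    rcases hm2 with hm2 | hm2
    swap
    · have h' : τ2 = n := hm2
      exact absurd h' hns.2
    have hτ2eq : τ2 = a + 1 := by
      rcases Nat.lt_trichotomy τ2 (a + 1) with hc | hc | hc
      · exfalso
        have hm2' : zd τ2 ≤ runMax W0 v2 τ2 ω := hm2
        have : runMax W0 v2 τ2 ω = runMax W0 v3 τ2 ω := rm_low hoff23 τ2 (by omega)
        rw [this] at hm2'
        exact absurd hm2' (not_le_of_gt hns.1)
      · exact hc
      · exfalso
        have hm2' : zd τ2 ≤ runMax W0 v2 τ2 ω := hm2
        have : runMax W0 v2 τ2 ω = runMax W0 v3 τ2 ω :=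
          rm_high hoff23 hmax32.symm τ2 (by omega)
        rw [this] at hm2'
        exact absurd hm2' (not_le_of_gt hns.1)
    -- now W0 < v2 a = v3 (a+1)
    have hpre23 : runMax W0 v2 a ω = runMax W0 v3 a ω := rm_low hoff23 a le_rfl
    have hR2succ : runMax W0 v2 (a + 1) ω = max (runMax W0 v3 a ω) (v2 a ω) := by
      rw [runMax_succ, hpre23]
    have hR3succ : runMax W0 v3 (a + 1) ω = max (runMax W0 v3 a ω) (v3 a ω) :=
      runMax_succ a
    have hzd2 : zd (a + 1) ≤ max (runMax W0 v3 a ω) (v2 a ω) := by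
      rw [← hR2succ, ← hτ2eq]; exact hm2
    have hzd3 : max (runMax W0 v3 a ω) (v3 a ω) < zd (a + 1) := by
      rw [← hR3succ, ← hτ2eq]; exact hns.1
    have hs_gt : runMax W0 v3 a ω < v2 a ω := by
      by_contra hc
      push_neg at hc
      have : max (runMax W0 v3 a ω) (v2 a ω) = runMax W0 v3 a ω := max_eq_left hc
      rw [this] at hzd2
      exact absurd (hzd2.trans_lt (lt_of_le_of_lt (le_max_left _ _) hzd3)) (lt_irrefl _)
    have hW0s : W0 ω < v2 a ω := by
      have : W0 ω < runMax W0 v2 τ2 ω := hP2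
      rw [hτ2eq, hR2succ, max_eq_right hs_gt.le] at this
      exact this
    have hτ3ge : a + 2 ≤ τ3 := by omega
    show W0 ω < runMax W0 v3 τ3 ω
    calc W0 ω < v2 a ω := hW0s
      _ = v3 (a + 1) ω := h3b.symm
      _ ≤ max (runMax W0 v3 (a+1) ω) (v3 (a+1) ω) := le_max_right _ _
      _ = runMax W0 v3 (a + 2) ω := (runMax_succ (a+1)).symm
      _ ≤ runMax W0 v3 τ3 ω := runMax_mono hτ3ge


lemma purchase_combine {v1 v2 v3 v4 : ℕ → Ω → ℝ}
    (o13 : ∀ j, j ≠ a → j ≠ a + 1 → v1 j ω = v3 j ω)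
    (o14 : ∀ j, j ≠ a → j ≠ a + 1 → v1 j ω = v4 j ω)
    (o23 : ∀ j, j ≠ a → j ≠ a + 1 → v2 j ω = v3 j ω)
    (o24 : ∀ j, j ≠ a → j ≠ a + 1 → v2 j ω = v4 j ω)
    (hv3a : v3 a ω = v1 (a + 1) ω) (hv3b : v3 (a + 1) ω = v1 a ω)
    (hv4a : v4 a ω = v2 (a + 1) ω) (hv4b : v4 (a + 1) ω = v2 a ω)
    (hpt : v1 a ω ≤ v2 (a + 1) ω) (hsq : v2 a ω ≤ v1 (a + 1) ω)
    (han : a + 1 < n) :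
    ((ω ∈ purchaseEvent n zd W0 v1 ∨ ω ∈ purchaseEvent n zd W0 v2) →
      (ω ∈ purchaseEvent n zd W0 v3 ∨ ω ∈ purchaseEvent n zd W0 v4)) ∧
    ((ω ∈ purchaseEvent n zd W0 v1 ∧ ω ∈ purchaseEvent n zd W0 v2) →
      (ω ∈ purchaseEvent n zd W0 v3 ∧ ω ∈ purchaseEvent n zd W0 v4)) := by
  have e13 : ω ∈ purchaseEvent n zd W0 v1 → v1 a ω ≤ v1 (a+1) ω →
      ω ∈ purchaseEvent n zd W0 v3 := by
    intro h hle
    refine purchase_easy o13 ?_ ?_ h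
    · rw [hv3a]; exact hle
    · rw [hv3a, hv3b, max_comm]
  have e14 : ω ∈ purchaseEvent n zd W0 v1 → v1 (a+1) ω ≤ v1 a ω →
      ω ∈ purchaseEvent n zd W0 v4 := by
    intro h hle
    refine purchase_easy o14 ?_ ?_ h
    · rw [hv4a]; exact hpt
    · rw [hv4a, hv4b, max_eq_left hle]
      exact le_max_of_le_left hpt
  have e24 : ω ∈ purchaseEvent n zd W0 v2 → v2 a ω ≤ v2 (a+1) ω →
      ω ∈ purchaseEvent n zd W0 v4 := by
    intro h hle
    refine purchase_easy o24 ?_ ?_ h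
    · rw [hv4a]; exact hle
    · rw [hv4a, hv4b, max_comm]
  have e23 : ω ∈ purchaseEvent n zd W0 v2 → v2 (a+1) ω ≤ v2 a ω →
      ω ∈ purchaseEvent n zd W0 v3 := by
    intro h hle
    refine purchase_easy o23 ?_ ?_ h
    · rw [hv3a]; exact hsq
    · rw [hv3a, hv3b, max_eq_left hle]
      exact le_max_of_le_left hsq
  constructor
  · rintro (h | h)
    · rcases le_total (v1 a ω) (v1 (a+1) ω) with hle | hle
      · exact Or.inl (e13 h hle)
      · exact Or.inr (e14 h hle)
    · rcases le_total (v2 a ω) (v2 (a+1) ω) with hle | hle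
      · exact Or.inr (e24 h hle)
      · exact Or.inl (e23 h hle)
  · rintro ⟨h1, h2⟩
    constructor
    · rcases le_total (v1 a ω) (v1 (a+1) ω) with hle | hle
      · exact e13 h1 hle
      · refine purchase_hard o23 o13 ?_ hv3a hv3b ?_ han h2 h1
        · rw [hv3a]; exact hsq
        · rw [hv3a, hv3b]; exact hle
    · rcases le_total (v2 a ω) (v2 (a+1) ω) with hle | hle
      · exact e24 h2 hle
      · refine purchase_hard o14 o24 ?_ hv4a hv4b ?_ han h1 h2
        · rw [hv4a]; exact hpt
        · rw [hv4a, hv4b]; exact hle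

end Pair
end Det

section Meas

variable {Ω : Type*} [MeasurableSpace Ω] {W0 : Ω → ℝ} {v : ℕ → Ω → ℝ} {n : ℕ} {zd : ℕ → ℝ}

lemma measurable_runMax (hW0 : Measurable W0) (hv : ∀ j, Measurable (v j)) (h : ℕ) :
    Measurable (fun ω => runMax W0 v h ω) := by
  induction h with
  | zero =>
    have : (fun ω => runMax W0 v 0 ω) = W0 := funext (fun ω => runMax_zero)
    rw [this]; exact hW0
  | succ m ih =>
    have : (fun ω => runMax W0 v (m+1) ω)
        = fun ω => max (runMax W0 v m ω) (v m ω) := funext (fun ω => runMax_succ m)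
    rw [this]
    exact Measurable.max ih (hv m)

lemma measurableSet_purchaseEvent (hW0 : Measurable W0) (hv : ∀ j, Measurable (v j)) :
    MeasurableSet (purchaseEvent n zd W0 v) := by
  have hA : ∀ h : ℕ, MeasurableSet {ω | zd h ≤ runMax W0 v h ω ∨ h = n} := by
    intro h
    by_cases hn : h = n
    · have : {ω : Ω | zd h ≤ runMax W0 v h ω ∨ h = n} = Set.univ := by
        ext ω; simp [hn]
      rw [this]; exact MeasurableSet.univ
    · have : {ω : Ω | zd h ≤ runMax W0 v h ω ∨ h = n} = {ω | zd h ≤ runMax W0 v h ω} := by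
        ext ω; simp [hn]
      rw [this]
      exact measurableSet_le measurable_const (measurable_runMax hW0 hv h)
  have hstop : ∀ h : ℕ, MeasurableSet {ω | stopPos n zd W0 v ω = h} := by
    intro h
    have : {ω | stopPos n zd W0 v ω = h} =
        {ω | zd h ≤ runMax W0 v h ω ∨ h = n} ∩
          (⋂ k, ⋂ (_ : k < h), {ω | zd k ≤ runMax W0 v k ω ∨ k = n}ᶜ) := by
      ext ω
      simp only [Set.mem_setOf_eq, Set.mem_inter_iff, Set.mem_iInter, Set.mem_compl_iff,
        stop_eq_iff]
    rw [this]
    exact (hA h).inter (MeasurableSet.iInter fun k =>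
      MeasurableSet.iInter fun _ => (hA k).compl)
  have hdecomp : purchaseEvent n zd W0 v =
      ⋃ h, ({ω | stopPos n zd W0 v ω = h} ∩ {ω | W0 ω < runMax W0 v h ω}) := by
    ext ω
    simp only [Set.mem_iUnion, Set.mem_inter_iff, Set.mem_setOf_eq]
    constructor
    · intro hp
      exact ⟨stopPos n zd W0 v ω, rfl, hp⟩
    · rintro ⟨h, hh, hp⟩
      show W0 ω < runMax W0 v (stopPos n zd W0 v ω) ω
      rw [hh]; exact hp
  rw [hdecomp]
  exact MeasurableSet.iUnion fun h => (hstop h).inter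
    (measurableSet_lt hW0 (measurable_runMax hW0 hv h))

lemma measurable_posVal {u : Fin n → ℝ} {M : Fin n → Ω → ℝ} (hM : ∀ i, Measurable (M i))
    (r : Equiv.Perm (Fin n)) (j : ℕ) : Measurable (posVal n u M r j) := by
  unfold posVal
  split
  · exact measurable_const.add (hM _)
  · exact measurable_const

end Meas

section Comp

variable {Ω X : Type*} {n : ℕ} {zd : ℕ → ℝ}

lemma purchaseEvent_comp (g : Ω → X) (W0 : X → ℝ) (v : ℕ → X → ℝ) :
    g ⁻¹' purchaseEvent n zd W0 v
      = purchaseEvent n zd (fun ω => W0 (g ω)) (fun j ω => v j (g ω)) := rfl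

lemma purchaseEvent_congr {W0 W0' : Ω → ℝ} {v v' : ℕ → Ω → ℝ}
    (hW : W0 = W0') (hv : ∀ j, v j = v' j) :
    purchaseEvent n zd W0 v = purchaseEvent n zd W0' v' := by
  subst hW
  have : v = v' := funext hv
  subst this
  rfl

end Comp

section Comp2
variable {Ω : Type*} {n : ℕ}

lemma posVal_pos {u : Fin n → ℝ} {M : Fin n → Ω → ℝ} (r : Equiv.Perm (Fin n))
    {j : ℕ} (hj : j < n) (ω : Ω) :
    posVal n u M r j ω = u (r ⟨j, hj⟩) + M (r ⟨j, hj⟩) ω := dif_pos hj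

lemma posVal_neg {u : Fin n → ℝ} {M : Fin n → Ω → ℝ} (r : Equiv.Perm (Fin n))
    {j : ℕ} (hj : ¬ j < n) (ω : Ω) : posVal n u M r j ω = 0 := dif_neg hj

end Comp2


/-- In the sequential discovery model with i.i.d. continuous noise, weakly
decreasing discovery values and independent outside option, swapping two adjacent
products `A` (position `a`) and `B` (position `a+1`) with `u_A < u_B` weakly increases
the overall purchase probability. -/
theorem adjacent_swap_increases_purchase_probability
    {Ω : Type*} [MeasurableSpace Ω] (μ : Measure Ω) [IsProbabilityMeasure μ]
    (n : ℕ) (u : Fin n → ℝ) (M : Fin n → Ω → ℝ) (W0 : Ω → ℝ)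
    (hW0 : Measurable W0) (hM : ∀ i, Measurable (M i))
    (hindep : ProbabilityTheory.iIndepFun
      (Fin.cons W0 M : Fin (n + 1) → Ω → ℝ) μ)
    (hid : ∀ i j : Fin n, μ.map (M i) = μ.map (M j))
    (hcont : ∀ (i : Fin n) (t : ℝ), μ {ω | M i ω = t} = 0)
    (zd : ℕ → ℝ) (hzd : Antitone zd)
    (r : Equiv.Perm (Fin n)) (a b : Fin n) (hab : (a : ℕ) + 1 = (b : ℕ))
    (hu : u (r a) < u (r b)) :
    μ (purchaseEvent n zd W0 (posVal n u M r)) ≤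
      μ (purchaseEvent n zd W0 (posVal n u M ((Equiv.swap a b).trans r))) := by
  classical
  have hbn : (b : ℕ) < n := b.isLt
  have han : (a : ℕ) + 1 < n := by omega
  have hane : a ≠ b := by
    intro h
    rw [h] at hab
    omega
  set r' : Equiv.Perm (Fin n) := (Equiv.swap a b).trans r with hr'
  set Xf : Fin (n+1) → Ω → ℝ := Fin.cons W0 M with hXfdef
  have hXf : ∀ k, Measurable (Xf k) := by
    intro k
    refine Fin.cases ?_ ?_ k
    · simpa [hXfdef] using hW0
    · intro i; simpa [hXfdef] using hM i
  set f : Ω → (Fin (n+1) → ℝ) := fun ω k => Xf k ω with hfdef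
  have hf : Measurable f := measurable_pi_lambda _ hXf
  set i0 : Fin (n+1) := (r a).succ with hi0
  set j0 : Fin (n+1) := (r b).succ with hj0
  have hij : i0 ≠ j0 := by
    rw [hi0, hj0]
    intro h
    exact hane (r.injective (Fin.succ_injective _ h))
  set e : Equiv.Perm (Fin (n+1)) := Equiv.swap i0 j0 with hedef
  have he0 : e 0 = 0 := by
    rw [hedef]
    exact Equiv.swap_apply_of_ne_of_ne (Fin.succ_ne_zero _).symm (Fin.succ_ne_zero _).symm
  have heii : e i0 = j0 := by rw [hedef]; exact Equiv.swap_apply_left _ _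
  have hejj : e j0 = i0 := by rw [hedef]; exact Equiv.swap_apply_right _ _
  have hee : ∀ k, e (e k) = k := by
    intro k; rw [hedef]; exact Equiv.swap_apply_self _ _ _
  set T : (Fin (n+1) → ℝ) → (Fin (n+1) → ℝ) := fun x k => x (e k) with hTdef
  have hT : Measurable T := measurable_pi_lambda _ (fun k => measurable_pi_apply _)
  set W0' : (Fin (n+1) → ℝ) → ℝ := fun x => x 0 with hW0'def
  set M' : Fin n → (Fin (n+1) → ℝ) → ℝ := fun i x => x i.succ with hM'def
  have hW0' : Measurable W0' := measurable_pi_apply _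
  have hM' : ∀ i, Measurable (M' i) := fun i => measurable_pi_apply _
  set v1 : ℕ → (Fin (n+1) → ℝ) → ℝ := posVal n u M' r with hv1def
  set v3 : ℕ → (Fin (n+1) → ℝ) → ℝ := posVal n u M' r' with hv3def
  set E1 : Set (Fin (n+1) → ℝ) := purchaseEvent n zd W0' v1 with hE1def
  set E3 : Set (Fin (n+1) → ℝ) := purchaseEvent n zd W0' v3 with hE3def
  have hE1 : MeasurableSet E1 :=
    measurableSet_purchaseEvent hW0' (fun j => measurable_posVal hM' r j)
  have hE3 : MeasurableSet E3 :=
    measurableSet_purchaseEvent hW0' (fun j => measurable_posVal hM' r' j)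
  -- factorization of the events on Ω through f
  have hWf : W0 = fun ω => W0' (f ω) := by
    funext ω
    rw [hW0'def, hfdef]
    simp [hXfdef]
  have hvf : ∀ (ρ : Equiv.Perm (Fin n)) j,
      posVal n u M ρ j = fun ω => posVal n u M' ρ j (f ω) := by
    intro ρ j
    funext ω
    by_cases hj : j < n
    · rw [posVal_pos ρ hj, posVal_pos ρ hj]
      rw [hM'def, hfdef]
      simp [hXfdef]
    · rw [posVal_neg ρ hj, posVal_neg ρ hj]
  have hfac1 : purchaseEvent n zd W0 (posVal n u M r) = f ⁻¹' E1 := by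
    rw [hE1def, hv1def, purchaseEvent_comp]
    exact purchaseEvent_congr hWf (hvf r)
  have hfac3 : purchaseEvent n zd W0 (posVal n u M r') = f ⁻¹' E3 := by
    rw [hE3def, hv3def, purchaseEvent_comp]
    exact purchaseEvent_congr hWf (hvf r')
  -- marginals and product structure
  set m : Fin (n+1) → Measure ℝ := fun k => μ.map (Xf k) with hmdef
  haveI hmprob : ∀ k, IsProbabilityMeasure (m k) := by
    intro k
    rw [hmdef]
    exact Measure.isProbabilityMeasure_map (hXf k).aemeasurable
  have hmswap : ∀ k, m (e k) = m k := by
    intro k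
    rcases eq_or_ne k i0 with hk | hk
    · subst hk
      rw [heii, hmdef]
      show μ.map (Xf j0) = μ.map (Xf i0)
      rw [hi0, hj0, hXfdef]
      simp only [Fin.cons_succ]
      exact hid (r b) (r a)
    · rcases eq_or_ne k j0 with hk2 | hk2
      · subst hk2
        rw [hejj, hmdef]
        show μ.map (Xf i0) = μ.map (Xf j0)
        rw [hi0, hj0, hXfdef]
        simp only [Fin.cons_succ]
        exact hid (r a) (r b)
      · rw [hedef, Equiv.swap_apply_of_ne_of_ne hk hk2]
  have hmapf : Measure.pi m = μ.map f := by
    refine Measure.pi_eq fun s hs => ?_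
    rw [Measure.map_apply hf (MeasurableSet.univ_pi hs)]
    have hpre : f ⁻¹' Set.pi Set.univ s
        = ⋂ k ∈ (Finset.univ : Finset (Fin (n+1))), Xf k ⁻¹' s k := by
      ext ω
      simp [hfdef, Set.mem_pi]
    rw [hpre, hindep.measure_inter_preimage_eq_mul Finset.univ (fun k _ => hs k)]
    exact Finset.prod_congr rfl fun k _ => (Measure.map_apply (hXf k) (hs k)).symm
  set fS : Ω → (Fin (n+1) → ℝ) := fun ω k => Xf (e k) ω with hfSdef
  have hfS : Measurable fS := measurable_pi_lambda _ (fun k => hXf (e k))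
  have hmapfS : Measure.pi m = μ.map fS := by
    refine Measure.pi_eq fun s hs => ?_
    rw [Measure.map_apply hfS (MeasurableSet.univ_pi hs)]
    have hpre : fS ⁻¹' Set.pi Set.univ s
        = ⋂ k ∈ (Finset.univ : Finset (Fin (n+1))), Xf k ⁻¹' s (e k) := by
      ext ω
      simp only [Set.mem_preimage, Set.mem_pi, Set.mem_univ, true_implies, Set.mem_iInter,
        hfSdef, Finset.mem_univ, forall_const]
      constructor
      · intro h k
        have := h (e k)
        rwa [hee] at this
      · intro h k
        have := h (e k)
        rwa [hee] at this
    rw [hpre, hindep.measure_inter_preimage_eq_mul Finset.univ (fun k _ => hs (e k))]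
    calc ∏ k, μ (Xf k ⁻¹' s (e k)) = ∏ k, m (e k) (s (e k)) := by
          refine Finset.prod_congr rfl fun k _ => ?_
          rw [hmswap k, hmdef]
          exact (Measure.map_apply (hXf k) (hs (e k))).symm
      _ = ∏ k, m k (s k) := Equiv.prod_comp e (fun k => m k (s k))
  have hmapT : (μ.map f).map T = μ.map f := by
    rw [Measure.map_map hT hf]
    have : T ∘ f = fS := rfl
    rw [this, ← hmapfS, hmapf]
  -- pointwise values
  set v2 : ℕ → (Fin (n+1) → ℝ) → ℝ := fun j x => v1 j (T x) with hv2def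
  set v4 : ℕ → (Fin (n+1) → ℝ) → ℝ := fun j x => v3 j (T x) with hv4def
  have hWT : (fun x : Fin (n+1) → ℝ => W0' (T x)) = W0' := by
    funext x
    rw [hW0'def, hTdef]
    simp only [he0]
  have hT1 : T ⁻¹' E1 = purchaseEvent n zd W0' v2 := by
    rw [hE1def, purchaseEvent_comp]
    exact purchaseEvent_congr hWT (fun j => rfl)
  have hT3 : T ⁻¹' E3 = purchaseEvent n zd W0' v4 := by
    rw [hE3def, purchaseEvent_comp]
    exact purchaseEvent_congr hWT (fun j => rfl)
  -- auxiliary index facts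
  have hfa : ∀ (h : (a:ℕ) < n), (⟨(a:ℕ), h⟩ : Fin n) = a := fun h => Fin.eta a h
  have hfb : (⟨(a:ℕ)+1, han⟩ : Fin n) = b := by
    apply Fin.ext
    simpa using hab
  have hr'a : r' a = r b := by
    rw [hr']
    simp [Equiv.swap_apply_left]
  have hr'b : r' b = r a := by
    rw [hr']
    simp [Equiv.swap_apply_right]
  -- off-diagonal agreement
  have hFix : ∀ (c : Fin n), c ≠ a → c ≠ b → e ((r c).succ) = (r c).succ := by
    intro c hca hcb
    rw [hedef, hi0, hj0]
    apply Equiv.swap_apply_of_ne_of_ne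
    · intro h
      exact hca (r.injective (Fin.succ_injective _ h))
    · intro h
      exact hcb (r.injective (Fin.succ_injective _ h))
  have hne_ab : ∀ (j : ℕ) (hj : j < n), j ≠ (a:ℕ) → j ≠ (a:ℕ)+1 →
      (⟨j, hj⟩ : Fin n) ≠ a ∧ (⟨j, hj⟩ : Fin n) ≠ b := by
    intro j hj h1 h2
    constructor
    · intro h; exact h1 (by rw [← h])
    · intro h
      apply h2
      have h' := congrArg Fin.val h
      simp only [Fin.val_mk] at h'
      omega
  have hF1 : ∀ (y : Fin (n+1) → ℝ) (j : ℕ), j ≠ (a:ℕ) → j ≠ (a:ℕ)+1 →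
      v1 j y = v3 j y := by
    intro y j h1 h2
    by_cases hj : j < n
    · obtain ⟨hca, hcb⟩ := hne_ab j hj h1 h2
      rw [hv1def, hv3def, posVal_pos r hj, posVal_pos r' hj]
      have : r' ⟨j, hj⟩ = r ⟨j, hj⟩ := by
        rw [hr']
        simp [Equiv.swap_apply_of_ne_of_ne hca hcb]
      rw [this]
    · rw [hv1def, hv3def, posVal_neg r hj, posVal_neg r' hj]
  have hF2 : ∀ (ρ : Equiv.Perm (Fin n)), (∀ c : Fin n, c ≠ a → c ≠ b → ρ c = r c) →
      ∀ (x : Fin (n+1) → ℝ) (j : ℕ), j ≠ (a:ℕ) → j ≠ (a:ℕ)+1 →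
      posVal n u M' ρ j (T x) = posVal n u M' ρ j x := by
    intro ρ hρ x j h1 h2
    by_cases hj : j < n
    · obtain ⟨hca, hcb⟩ := hne_ab j hj h1 h2
      rw [posVal_pos ρ hj, posVal_pos ρ hj]
      have hρc : ρ ⟨j, hj⟩ = r ⟨j, hj⟩ := hρ _ hca hcb
      have : M' (ρ ⟨j, hj⟩) (T x) = M' (ρ ⟨j, hj⟩) x := by
        rw [hM'def, hTdef]
        simp only []
        rw [hρc, hFix _ hca hcb]
      rw [this]
    · rw [posVal_neg ρ hj, posVal_neg ρ hj]
  have hrfix : ∀ c : Fin n, c ≠ a → c ≠ b → r c = r c := fun _ _ _ => rfl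
  have hr'fix : ∀ c : Fin n, c ≠ a → c ≠ b → r' c = r c := by
    intro c hca hcb
    rw [hr']
    simp [Equiv.swap_apply_of_ne_of_ne hca hcb]
  -- positional values
  have hval1a : ∀ x : Fin (n+1) → ℝ, v1 (a:ℕ) x = u (r a) + x i0 := by
    intro x
    rw [hv1def, posVal_pos r a.isLt, hfa a.isLt, hM'def, hi0]
  have hval1b : ∀ x : Fin (n+1) → ℝ, v1 ((a:ℕ)+1) x = u (r b) + x j0 := by
    intro x
    rw [hv1def, posVal_pos r han, hfb, hM'def, hj0]
  have hval3a : ∀ x : Fin (n+1) → ℝ, v3 (a:ℕ) x = u (r b) + x j0 := by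
    intro x
    rw [hv3def, posVal_pos r' a.isLt, hfa a.isLt, hr'a, hM'def, hj0]
  have hval3b : ∀ x : Fin (n+1) → ℝ, v3 ((a:ℕ)+1) x = u (r a) + x i0 := by
    intro x
    rw [hv3def, posVal_pos r' han, hfb, hr'b, hM'def, hi0]
  have hTi0 : ∀ x : Fin (n+1) → ℝ, (T x) i0 = x j0 := by
    intro x; rw [hTdef]; simp only [heii]
  have hTj0 : ∀ x : Fin (n+1) → ℝ, (T x) j0 = x i0 := by
    intro x; rw [hTdef]; simp only [hejj]
  -- the pointwise inclusion via purchase_combine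
  have hcomb : ∀ x : Fin (n+1) → ℝ,
      ((x ∈ purchaseEvent n zd W0' v1 ∨ x ∈ purchaseEvent n zd W0' v2) →
        (x ∈ purchaseEvent n zd W0' v3 ∨ x ∈ purchaseEvent n zd W0' v4)) ∧
      ((x ∈ purchaseEvent n zd W0' v1 ∧ x ∈ purchaseEvent n zd W0' v2) →
        (x ∈ purchaseEvent n zd W0' v3 ∧ x ∈ purchaseEvent n zd W0' v4)) := by
    intro x
    have o13 : ∀ j, j ≠ (a:ℕ) → j ≠ (a:ℕ)+1 → v1 j x = v3 j x := fun j h1 h2 =>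
      hF1 x j h1 h2
    have o14 : ∀ j, j ≠ (a:ℕ) → j ≠ (a:ℕ)+1 → v1 j x = v4 j x := by
      intro j h1 h2
      rw [hv4def]
      show v1 j x = v3 j (T x)
      rw [← hF1 (T x) j h1 h2]
      show v1 j x = posVal n u M' r j (T x)
      rw [hF2 r hrfix x j h1 h2, hv1def]
    have o23 : ∀ j, j ≠ (a:ℕ) → j ≠ (a:ℕ)+1 → v2 j x = v3 j x := by
      intro j h1 h2
      rw [hv2def]
      show v1 j (T x) = v3 j x
      rw [hv1def, hF2 r hrfix x j h1 h2, ← hv1def]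
      exact hF1 x j h1 h2
    have o24 : ∀ j, j ≠ (a:ℕ) → j ≠ (a:ℕ)+1 → v2 j x = v4 j x := by
      intro j h1 h2
      rw [hv2def, hv4def]
      show v1 j (T x) = v3 j (T x)
      exact hF1 (T x) j h1 h2
    refine purchase_combine o13 o14 o23 o24 ?_ ?_ ?_ ?_ ?_ ?_ han
    · rw [hval3a x, hval1b x]
    · rw [hval3b x, hval1a x]
    · rw [hv4def]
      show v3 (a:ℕ) (T x) = v2 ((a:ℕ)+1) x
      rw [hval3a (T x), hTj0 x, hv2def]
      show u (r b) + x i0 = v1 ((a:ℕ)+1) (T x)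
      rw [hval1b (T x), hTj0 x]
    · rw [hv4def]
      show v3 ((a:ℕ)+1) (T x) = v2 (a:ℕ) x
      rw [hval3b (T x), hTi0 x, hv2def]
      show u (r a) + x j0 = v1 (a:ℕ) (T x)
      rw [hval1a (T x), hTi0 x]
    · rw [hv2def]
      show v1 (a:ℕ) x ≤ v1 ((a:ℕ)+1) (T x)
      rw [hval1a x, hval1b (T x), hTj0 x]
      exact add_le_add_left hu.le _
    · rw [hv2def]
      show v1 (a:ℕ) (T x) ≤ v1 ((a:ℕ)+1) x
      rw [hval1a (T x), hval1b x, hTi0 x]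
      exact add_le_add_left hu.le _
  -- set inclusions
  have hsub_union : E1 ∪ T ⁻¹' E1 ⊆ E3 ∪ T ⁻¹' E3 := by
    rw [hT1, hT3, hE1def, hE3def]
    intro x hx
    exact (hcomb x).1 hx
  have hsub_inter : E1 ∩ T ⁻¹' E1 ⊆ E3 ∩ T ⁻¹' E3 := by
    rw [hT1, hT3, hE1def, hE3def]
    intro x hx
    exact (hcomb x).2 hx
  -- conclude
  set ν := μ.map f with hνdef
  have hν1 : μ (purchaseEvent n zd W0 (posVal n u M r)) = ν E1 := by
    rw [hfac1, hνdef, Measure.map_apply hf hE1]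
  have hν3 : μ (purchaseEvent n zd W0 (posVal n u M r')) = ν E3 := by
    rw [hfac3, hνdef, Measure.map_apply hf hE3]
  have hTE1 : ν (T ⁻¹' E1) = ν E1 := by
    rw [hνdef, ← Measure.map_apply hT hE1, hmapT]
  have hTE3 : ν (T ⁻¹' E3) = ν E3 := by
    rw [hνdef, ← Measure.map_apply hT hE3, hmapT]
  have key : ν E1 + ν E1 ≤ ν E3 + ν E3 := by
    calc ν E1 + ν E1 = ν E1 + ν (T ⁻¹' E1) := by rw [hTE1]
      _ = ν (E1 ∪ T ⁻¹' E1) + ν (E1 ∩ T ⁻¹' E1) :=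
        (measure_union_add_inter E1 (hE1.preimage hT)).symm
      _ ≤ ν (E3 ∪ T ⁻¹' E3) + ν (E3 ∩ T ⁻¹' E3) :=
        add_le_add (measure_mono hsub_union) (measure_mono hsub_inter)
      _ = ν E3 + ν (T ⁻¹' E3) := measure_union_add_inter E3 (hE3.preimage hT)
      _ = ν E3 + ν E3 := by rw [hTE3]
  rw [show purchaseEvent n zd W0 (posVal n u M ((Equiv.swap a b).trans r))
    = purchaseEvent n zd W0 (posVal n u M r') from rfl, hν1, hν3]
  by_contra hcc
  push_neg at hcc
  exact absurd key (not_le_of_gt (ENNReal.add_lt_add hcc hcc))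
end

section
/- A ranking that orders products in decreasing order of expected utility u_j^e maximizes the overall purchase probability: for any ranking r of n products, the purchase probability under the decreasing-u^e ranking is at least that under r. (It suffices to show any ranking violating the order admits an adjacent swap that weakly increases purchase probability, and that the number of rankings is finite.) -/
open MeasureTheory

/-! ### Auxiliary definitions and lemmas -/

/-- The (deterministic) position at which the consumer would stop if no discovered
value ever exceeded the outside option value `w`. -/
noncomputable def T0fun (n : ℕ) (zd : ℕ → ℝ) (w : ℝ) : ℕ :=
  sInf {h : ℕ | zd h ≤ w ∨ h = n}

lemma T0fun_le_n (n : ℕ) (zd : ℕ → ℝ) (w : ℝ) : T0fun n zd w ≤ n :=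
  Nat.sInf_le (Or.inr rfl)

lemma T0fun_mem (n : ℕ) (zd : ℕ → ℝ) (w : ℝ) :
    zd (T0fun n zd w) ≤ w ∨ T0fun n zd w = n := by
  have h : T0fun n zd w ∈ {h : ℕ | zd h ≤ w ∨ h = n} := Nat.sInf_mem ⟨n, Or.inr rfl⟩
  exact h

lemma not_mem_of_lt_T0fun {n : ℕ} {zd : ℕ → ℝ} {w : ℝ} {h : ℕ}
    (hh : h < T0fun n zd w) : ¬(zd h ≤ w ∨ h = n) :=
  Nat.notMem_of_lt_sInf hh

lemma measurableSet_T0fun_le (n : ℕ) (zd : ℕ → ℝ) (k : ℕ) :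
    MeasurableSet {w : ℝ | T0fun n zd w ≤ k} := by
  have hset : {w : ℝ | T0fun n zd w ≤ k}
      = ⋃ (h : ℕ) (_ : h ≤ k), {w : ℝ | zd h ≤ w ∨ h = n} := by
    ext w
    simp only [Set.mem_setOf_eq, Set.mem_iUnion]
    constructor
    · intro hle
      exact ⟨T0fun n zd w, hle, T0fun_mem n zd w⟩
    · rintro ⟨h, hk, hmem⟩
      exact le_trans (Nat.sInf_le hmem) hk
  rw [hset]
  refine MeasurableSet.iUnion fun h => MeasurableSet.iUnion fun _ => ?_
  by_cases hn : h = n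
  · have : {w : ℝ | zd h ≤ w ∨ h = n} = Set.univ := by
      ext w; simp [hn]
    rw [this]; exact MeasurableSet.univ
  · have : {w : ℝ | zd h ≤ w ∨ h = n} = Set.Ici (zd h) := by
      ext w; simp [hn]
    rw [this]; exact measurableSet_Ici

/-- The purchase event happens iff some product discovered before the
"outside-option stopping position" beats the outside option. -/
lemma purchaseEvent_eq {Ω : Type*} (n : ℕ) (zd : ℕ → ℝ) (W0 : Ω → ℝ) (v : ℕ → Ω → ℝ) :
    purchaseEvent n zd W0 v
      = {ω | ∃ j : ℕ, j < T0fun n zd (W0 ω) ∧ W0 ω < v j ω} := by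
  ext ω
  simp only [purchaseEvent, Set.mem_setOf_eq]
  have hrm : ∀ h : ℕ, (∀ i < h, v i ω ≤ W0 ω) → runMax W0 v h ω = W0 ω := by
    intro h hle
    apply le_antisymm
    · apply Finset.sup'_le
      intro j hj
      by_cases hj0 : j = 0
      · simp [hj0]
      · simp only [if_neg hj0]
        apply hle
        have hjr : j < h + 1 := Finset.mem_range.mp hj
        omega
    · exact Finset.le_sup'_of_le _ (Finset.mem_range.mpr (Nat.succ_pos h)) (by simp)
  constructor
  · intro hpur
    by_contra hex
    push_neg at hex
    have hrmT : ∀ h ≤ T0fun n zd (W0 ω), runMax W0 v h ω = W0 ω := fun h hh =>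
      hrm h fun i hi => hex i (lt_of_lt_of_le hi hh)
    have hnotQ : ∀ h < T0fun n zd (W0 ω),
        h ∉ {h : ℕ | zd h ≤ runMax W0 v h ω ∨ h = n} := by
      intro h hh hmem
      rw [Set.mem_setOf_eq, hrmT h hh.le] at hmem
      exact not_mem_of_lt_T0fun hh hmem
    have hTQ : T0fun n zd (W0 ω) ∈ {h : ℕ | zd h ≤ runMax W0 v h ω ∨ h = n} := by
      rcases T0fun_mem n zd (W0 ω) with h1 | h2
      · exact Or.inl (by rw [hrmT _ le_rfl]; exact h1)
      · exact Or.inr h2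
    have hST : stopPos n zd W0 v ω = T0fun n zd (W0 ω) := by
      refine le_antisymm (Nat.sInf_le hTQ) ?_
      by_contra hlt
      push_neg at hlt
      exact hnotQ _ hlt (Nat.sInf_mem ⟨n, Or.inr rfl⟩)
    rw [hST, hrmT _ le_rfl] at hpur
    exact lt_irrefl _ hpur
  · rintro ⟨j, hjT, hjv⟩
    have hPne : {k : ℕ | k < T0fun n zd (W0 ω) ∧ W0 ω < v k ω}.Nonempty := ⟨j, hjT, hjv⟩
    set j' := sInf {k : ℕ | k < T0fun n zd (W0 ω) ∧ W0 ω < v k ω} with hj'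
    have hj'mem : j' < T0fun n zd (W0 ω) ∧ W0 ω < v j' ω := Nat.sInf_mem hPne
    have hvle : ∀ i < j', v i ω ≤ W0 ω := by
      intro i hi
      by_contra hlt
      push_neg at hlt
      exact Nat.notMem_of_lt_sInf hi ⟨lt_trans hi hj'mem.1, hlt⟩
    have hnotQ : ∀ h ≤ j', h ∉ {h : ℕ | zd h ≤ runMax W0 v h ω ∨ h = n} := by
      intro h hh hmem
      rw [Set.mem_setOf_eq, hrm h (fun i hi => hvle i (lt_of_lt_of_le hi hh))] at hmem
      exact not_mem_of_lt_T0fun (lt_of_le_of_lt hh hj'mem.1) hmem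
    have hS : j' < stopPos n zd W0 v ω := by
      by_contra hle
      push_neg at hle
      exact hnotQ _ hle (Nat.sInf_mem ⟨n, Or.inr rfl⟩)
    refine lt_of_lt_of_le hj'mem.2 ?_
    refine Finset.le_sup'_of_le _
      (Finset.mem_range.mpr (by omega : j' + 1 < stopPos n zd W0 v ω + 1)) ?_
    simp

/-- If every factor indexed by `C` is below every factor indexed by `D` and the two
index sets have the same cardinality, the product over `C` is below the product over `D`. -/
lemma prod_le_prod_of_card_eq_of_le {ι : Type*} [DecidableEq ι] (a : ι → ENNReal)
    (C D : Finset ι) (hcard : C.card = D.card)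
    (h : ∀ i ∈ C, ∀ j ∈ D, a i ≤ a j) :
    ∏ i ∈ C, a i ≤ ∏ j ∈ D, a j := by
  rcases D.eq_empty_or_nonempty with hD | hD
  · have hC : C = ∅ := Finset.card_eq_zero.mp (by rw [hcard, hD]; simp)
    simp [hC, hD]
  · obtain ⟨j0, hj0, hmin⟩ := D.exists_min_image a hD
    calc ∏ i ∈ C, a i ≤ ∏ _i ∈ C, a j0 :=
          Finset.prod_le_prod' fun i hi => h i hi j0 hj0
      _ = a j0 ^ C.card := Finset.prod_const _
      _ = a j0 ^ D.card := by rw [hcard]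
      _ = ∏ _j ∈ D, a j0 := (Finset.prod_const _).symm
      _ ≤ ∏ j ∈ D, a j := Finset.prod_le_prod' fun j hj => hmin j hj

lemma prod_le_prod_of_card_eq_of_le' {ι : Type*} [DecidableEq ι] (a : ι → ENNReal)
    (A B : Finset ι) (hcard : A.card = B.card)
    (h : ∀ i ∈ A, ∀ j ∉ A, a i ≤ a j) :
    ∏ i ∈ A, a i ≤ ∏ j ∈ B, a j := by
  have key : ∏ i ∈ A \ B, a i ≤ ∏ j ∈ B \ A, a j := by
    refine prod_le_prod_of_card_eq_of_le a _ _ ?_ ?_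
    · have h1 : (A ∩ B).card + (A \ B).card = A.card := Finset.card_inter_add_card_sdiff A B
      have h2 : (B ∩ A).card + (B \ A).card = B.card := Finset.card_inter_add_card_sdiff B A
      rw [Finset.inter_comm] at h2
      omega
    · intro i hi j hj
      exact h i (Finset.mem_sdiff.mp hi).1 j (Finset.mem_sdiff.mp hj).2
  have hA : ∏ i ∈ A, a i = (∏ i ∈ A \ B, a i) * ∏ i ∈ A ∩ B, a i := by
    rw [← Finset.sdiff_inter_self_left A B]
    exact (Finset.prod_sdiff Finset.inter_subset_left).symm
  have hB : ∏ j ∈ B, a j = (∏ j ∈ B \ A, a j) * ∏ j ∈ A ∩ B, a j := by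
    rw [Finset.inter_comm, ← Finset.sdiff_inter_self_left B A]
    exact (Finset.prod_sdiff Finset.inter_subset_left).symm
  rw [hA, hB]
  exact mul_le_mul_left key _

/-- A ranking ordering products in decreasing order of expected utility
maximizes the overall purchase probability: for any ranking `r`, the purchase
probability under a decreasing-`u` ranking `rStar` is at least that under `r`. -/
theorem utility_ranking_maximizes_purchase_probability
    {Ω : Type*} [MeasurableSpace Ω] (μ : Measure Ω) [IsProbabilityMeasure μ]
    (n : ℕ) (u : Fin n → ℝ) (M : Fin n → Ω → ℝ) (W0 : Ω → ℝ)
    (hW0 : Measurable W0) (hM : ∀ i, Measurable (M i))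
    (hindep : ProbabilityTheory.iIndepFun
      (Fin.cons W0 M : Fin (n + 1) → Ω → ℝ) μ)
    (hid : ∀ i j : Fin n, μ.map (M i) = μ.map (M j))
    (hcont : ∀ (i : Fin n) (t : ℝ), μ {ω | M i ω = t} = 0)
    (zd : ℕ → ℝ) (hzd : Antitone zd)
    (rStar : Equiv.Perm (Fin n))
    (hstar : ∀ p q : Fin n, p ≤ q → u (rStar q) ≤ u (rStar p))
    (r : Equiv.Perm (Fin n)) :
    μ (purchaseEvent n zd W0 (posVal n u M r)) ≤
      μ (purchaseEvent n zd W0 (posVal n u M rStar)) := by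
  classical
  set f : Fin (n + 1) → Ω → ℝ := Fin.cons W0 M with hf_def
  have hf : ∀ i, Measurable (f i) := by
    intro i
    refine Fin.cases ?_ ?_ i
    · simpa [hf_def] using hW0
    · intro j; simpa [hf_def] using hM j
  set κ : Fin (n + 1) → Measure ℝ := fun i => μ.map (f i) with hκ_def
  haveI hκprob : ∀ i, IsProbabilityMeasure (κ i) := fun i =>
    Measure.isProbabilityMeasure_map (hf i).aemeasurable
  set φ : Ω → (Fin (n + 1) → ℝ) := fun ω i => f i ω with hφ_def
  have hφ : Measurable φ := measurable_pi_lambda _ hf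
  -- the joint law is the product of the marginal laws
  have hjoint : μ.map φ = Measure.pi κ := by
    refine (Measure.pi_eq fun s hs => ?_).symm
    rw [Measure.map_apply hφ (MeasurableSet.univ_pi hs)]
    have hpre : φ ⁻¹' Set.pi Set.univ s = ⋂ i, f i ⁻¹' s i := by
      ext ω; simp [hφ_def, Set.mem_pi]
    rw [hpre, hindep.meas_iInter fun i => ⟨s i, hs i, rfl⟩]
    exact Finset.prod_congr rfl fun i _ => (Measure.map_apply (hf i) (hs i)).symm
  -- the product-space events
  set e : (Fin (n + 1) → ℝ) ≃ᵐ ℝ × (Fin n → ℝ) :=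
    MeasurableEquiv.piFinSuccAbove (fun _ => ℝ) 0 with he_def
  have hmp : MeasurePreserving e (Measure.pi κ)
      ((κ 0).prod (Measure.pi fun j => κ ((0 : Fin (n + 1)).succAbove j))) :=
    measurePreserving_piFinSuccAbove κ 0
  -- no-purchase events on the product space, for a generic ranking
  set H : Equiv.Perm (Fin n) → Set (ℝ × (Fin n → ℝ)) := fun ρ =>
    {p | ∀ j : Fin n, ((ρ.symm j : Fin n) : ℕ) < T0fun n zd p.1 → u j + p.2 j ≤ p.1}
    with hH_def
  have hHmeas : ∀ ρ, MeasurableSet (H ρ) := by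
    intro ρ
    have : H ρ = ⋂ j : Fin n,
        ({p : ℝ × (Fin n → ℝ) | T0fun n zd p.1 ≤ ((ρ.symm j : Fin n) : ℕ)}
          ∪ {p : ℝ × (Fin n → ℝ) | u j + p.2 j ≤ p.1}) := by
      ext p
      simp only [hH_def, Set.mem_setOf_eq, Set.mem_iInter, Set.mem_union]
      refine forall_congr' fun j => ?_
      rw [imp_iff_not_or, not_lt]
    rw [this]
    refine MeasurableSet.iInter fun j => MeasurableSet.union ?_ ?_
    · exact measurable_fst (measurableSet_T0fun_le n zd _)
    · exact measurableSet_le (measurable_const.add measurable_snd.eval) measurable_fst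
  -- the no-purchase event in Ω is the preimage of `H ρ`
  have hNpre : ∀ ρ : Equiv.Perm (Fin n),
      φ ⁻¹' (e ⁻¹' H ρ) = {ω | ∀ j : Fin n,
        ((ρ.symm j : Fin n) : ℕ) < T0fun n zd (W0 ω) → u j + M j ω ≤ W0 ω} := by
    intro ρ
    ext ω
    simp only [Set.mem_preimage, hH_def, Set.mem_setOf_eq]
    have h0 : (e (φ ω)).1 = W0 ω := by
      simp [he_def, hφ_def, hf_def, MeasurableEquiv.piFinSuccAbove]
    have h2 : ∀ j : Fin n, (e (φ ω)).2 j = M j ω := by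
      intro j
      simp [he_def, hφ_def, hf_def, MeasurableEquiv.piFinSuccAbove, Fin.removeNth,
        Fin.tail, Fin.cons_succ]
    rw [h0]
    exact forall_congr' fun j => by rw [h2 j]
  -- measure of the no-purchase event as an integral
  have hmeasN : ∀ ρ : Equiv.Perm (Fin n),
      μ (φ ⁻¹' (e ⁻¹' H ρ)) = ∫⁻ w, ∏ j : Fin n,
        (if ((ρ.symm j : Fin n) : ℕ) < T0fun n zd w
          then (μ.map (M j)) (Set.Iic (w - u j)) else 1) ∂(κ 0) := by
    intro ρ
    have h1 : μ (φ ⁻¹' (e ⁻¹' H ρ)) = (Measure.pi κ) (e ⁻¹' H ρ) := by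
      rw [← hjoint, Measure.map_apply hφ (e.measurable (hHmeas ρ))]
    have h2 : (Measure.pi κ) (e ⁻¹' H ρ)
        = ((κ 0).prod (Measure.pi fun j => κ ((0 : Fin (n + 1)).succAbove j))) (H ρ) := by
      rw [← hmp.map_eq, MeasurableEquiv.map_apply]
    rw [h1, h2, Measure.prod_apply (hHmeas ρ)]
    refine lintegral_congr fun w => ?_
    have hsec : Prod.mk w ⁻¹' H ρ = Set.pi Set.univ fun j : Fin n =>
        if ((ρ.symm j : Fin n) : ℕ) < T0fun n zd w then Set.Iic (w - u j) else Set.univ := by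
      ext y
      simp only [hH_def, Set.mem_preimage, Set.mem_setOf_eq, Set.mem_pi, Set.mem_univ,
        forall_true_left]
      refine forall_congr' fun j => ?_
      by_cases hc : ((ρ.symm j : Fin n) : ℕ) < T0fun n zd w
      · simp only [if_pos hc, Set.mem_Iic]
        constructor
        · intro h; linarith [h hc]
        · intro h _; linarith
      · simp [hc]
    rw [hsec, Measure.pi_pi]
    refine Finset.prod_congr rfl fun j _ => ?_
    have hcj : κ ((0 : Fin (n + 1)).succAbove j) = μ.map (M j) := by
      simp [hκ_def, hf_def, Fin.succAbove_zero]
    rw [hcj]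
    by_cases hc : ((ρ.symm j : Fin n) : ℕ) < T0fun n zd w
    · rw [if_pos hc, if_pos hc]
    · haveI : IsProbabilityMeasure (Measure.map (M j) μ) :=
        Measure.isProbabilityMeasure_map (hM j).aemeasurable
      rw [if_neg hc, if_neg hc, measure_univ]
  -- pointwise comparison of the integrands
  have hptwise : ∀ w : ℝ,
      (∏ j : Fin n, (if ((rStar.symm j : Fin n) : ℕ) < T0fun n zd w
          then (μ.map (M j)) (Set.Iic (w - u j)) else 1))
      ≤ ∏ j : Fin n, (if ((r.symm j : Fin n) : ℕ) < T0fun n zd w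
          then (μ.map (M j)) (Set.Iic (w - u j)) else 1) := by
    intro w
    set t := T0fun n zd w with ht
    set a : Fin n → ENNReal := fun j => (μ.map (M j)) (Set.Iic (w - u j)) with ha
    have hprodA : ∀ ρ : Equiv.Perm (Fin n),
        (∏ j : Fin n, (if ((ρ.symm j : Fin n) : ℕ) < t then a j else 1))
          = ∏ j ∈ Finset.univ.filter (fun j : Fin n => ((ρ.symm j : Fin n) : ℕ) < t), a j := by
      intro ρ
      rw [Finset.prod_filter]
    rw [hprodA rStar, hprodA r]
    have hcard : ∀ ρ : Equiv.Perm (Fin n),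
        (Finset.univ.filter (fun j : Fin n => ((ρ.symm j : Fin n) : ℕ) < t)).card
          = (Finset.univ.filter (fun p : Fin n => (p : ℕ) < t)).card := by
      intro ρ
      have himg : Finset.univ.filter (fun j : Fin n => ((ρ.symm j : Fin n) : ℕ) < t)
          = (Finset.univ.filter (fun p : Fin n => (p : ℕ) < t)).image ρ := by
        ext j
        simp only [Finset.mem_filter, Finset.mem_univ, true_and, Finset.mem_image]
        constructor
        · intro hj
          exact ⟨ρ.symm j, hj, ρ.apply_symm_apply j⟩
        · rintro ⟨p, hp, rfl⟩
          rwa [ρ.symm_apply_apply]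
      rw [himg, Finset.card_image_of_injective _ ρ.injective]
    refine prod_le_prod_of_card_eq_of_le' a _ _ ((hcard rStar).trans (hcard r).symm) ?_
    intro i hi j hj
    simp only [Finset.mem_filter, Finset.mem_univ, true_and] at hi hj
    push_neg at hj
    have hple : rStar.symm i ≤ rStar.symm j := by
      have : ((rStar.symm i : Fin n) : ℕ) < ((rStar.symm j : Fin n) : ℕ) :=
        lt_of_lt_of_le hi hj
      exact le_of_lt this
    have hu : u j ≤ u i := by
      have := hstar (rStar.symm i) (rStar.symm j) hple
      rwa [rStar.apply_symm_apply, rStar.apply_symm_apply] at this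
    calc a i = (μ.map (M i)) (Set.Iic (w - u i)) := rfl
      _ = (μ.map (M j)) (Set.Iic (w - u i)) := by rw [hid i j]
      _ ≤ (μ.map (M j)) (Set.Iic (w - u j)) := by
          exact measure_mono (Set.Iic_subset_Iic.mpr (by linarith))
      _ = a j := rfl
  -- identify purchase events with complements of the no-purchase events
  have hcompl : ∀ ρ : Equiv.Perm (Fin n),
      purchaseEvent n zd W0 (posVal n u M ρ) = (φ ⁻¹' (e ⁻¹' H ρ))ᶜ := by
    intro ρ
    rw [purchaseEvent_eq, hNpre ρ]
    ext ω
    simp only [Set.mem_setOf_eq, Set.mem_compl_iff, not_forall, not_le]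
    constructor
    · rintro ⟨j, hjT, hjv⟩
      have hjn : j < n := lt_of_lt_of_le hjT (T0fun_le_n n zd (W0 ω))
      refine ⟨ρ ⟨j, hjn⟩, ?_, ?_⟩
      · rw [ρ.symm_apply_apply]; exact hjT
      · rw [posVal, dif_pos hjn] at hjv; exact hjv
    · rintro ⟨j, hjT, hjv⟩
      refine ⟨((ρ.symm j : Fin n) : ℕ), hjT, ?_⟩
      have hjn : ((ρ.symm j : Fin n) : ℕ) < n := (ρ.symm j).isLt
      rw [posVal, dif_pos hjn]
      have : (⟨((ρ.symm j : Fin n) : ℕ), hjn⟩ : Fin n) = ρ.symm j := by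
        apply Fin.ext; rfl
      rw [this, ρ.apply_symm_apply]
      exact hjv
  -- conclude
  have hNmeas : ∀ ρ : Equiv.Perm (Fin n), MeasurableSet (φ ⁻¹' (e ⁻¹' H ρ)) :=
    fun ρ => hφ (e.measurable (hHmeas ρ))
  have hle : μ (φ ⁻¹' (e ⁻¹' H rStar)) ≤ μ (φ ⁻¹' (e ⁻¹' H r)) := by
    rw [hmeasN rStar, hmeasN r]
    exact lintegral_mono hptwise
  rw [hcompl r, hcompl rStar,
    measure_compl (hNmeas r) (measure_ne_top μ _),
    measure_compl (hNmeas rStar) (measure_ne_top μ _)]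
  exact tsub_le_tsub_left hle _
end
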